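/- Let τ be a path crossing the box I×J, let I' ⊆ I be an interval of width w with μ(J) ≥ w. Then there exists an interval J^1 with μ(J^1) = μ(I') such that ncost(I'×J^1) ≤ 2·ncost(τ_{I'}) and I'×J^1 (1 - ncost(τ_{I'}))-covers τ. -/

import Mathlib

open List

/-- Cost structure for the Levenshtein distance (formerly in Mathlib). -/
structure Levenshtein.Cost (α β δ : Type*) where
  delete : α → δ
  insert : β → δ
  substitute : α → β → δ

/-- Weighted cost (formerly in Mathlib). -/
def Levenshtein.weightCost {α δ : Type*} [Zero δ] (delete insert substitute : δ) [DecidableEq α] :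
    Levenshtein.Cost α α δ where
  delete _ := delete
  insert _ := insert
  substitute a b := if a = b then 0 else substitute

/-- Unit cost (formerly in Mathlib). -/
def Levenshtein.defaultCost {α : Type*} [DecidableEq α] : Levenshtein.Cost α α ℕ :=
  Levenshtein.weightCost 1 1 1

/-- Auxiliary step of the Levenshtein dynamic program (formerly in Mathlib). -/
def Levenshtein.impl {α β δ : Type*} [AddZeroClass δ] [Min δ] (C : Levenshtein.Cost α β δ)
    (xs : List α) (y : β) (d : {r : List δ // 0 < r.length}) : {r : List δ // 0 < r.length} :=
  let ⟨ds, w⟩ := d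
  xs.zip (ds.zip ds.tail) |>.foldr
    (init := ⟨[ds.getLast (List.ne_nil_of_length_pos w) + C.insert y], by simp⟩)
    (fun ⟨x, d₀, d₁⟩ ⟨r, w⟩ =>
      ⟨min (C.delete x + r[0]) (min (C.insert y + d₀) (C.substitute x y + d₁)) :: r, by simp⟩)

/-- Levenshtein distances of all suffixes (formerly in Mathlib). -/
def suffixLevenshtein {α β δ : Type*} [AddZeroClass δ] [Min δ] (C : Levenshtein.Cost α β δ)
    (xs : List α) (ys : List β) : {r : List δ // 0 < r.length} :=
  ys.foldr
    (Levenshtein.impl C xs)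
    (xs.foldr (init := ⟨[0], by simp⟩) (fun a ⟨r, w⟩ => ⟨(C.delete a + r[0]) :: r, by simp⟩))

/-- Levenshtein distance (formerly in Mathlib). -/
def levenshtein {α β δ : Type*} [AddZeroClass δ] [Min δ] (C : Levenshtein.Cost α β δ)
    (xs : List α) (ys : List β) : δ :=
  let ⟨r, _⟩ := suffixLevenshtein C xs ys
  r[0]

/-- Edit distance between two lists (Levenshtein distance with unit costs). -/
def edist {α : Type*} [DecidableEq α] (x y : List α) : ℕ :=
  levenshtein Levenshtein.defaultCost x y

/-- The substring of `x` indexed by the interval `I = {I.1, ..., I.2}` minus its minimum,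
i.e. the characters `x_{I.1+1}, ..., x_{I.2}` (1-indexed). -/
def sub {α : Type*} (x : List α) (I : ℕ × ℕ) : List α :=
  (x.drop I.1).take (I.2 - I.1)

/-- A single step in a grid graph: horizontal, vertical, or diagonal. -/
def IsStep (p q : ℕ × ℕ) : Prop :=
  q = (p.1 + 1, p.2) ∨ q = (p.1, p.2 + 1) ∨ q = (p.1 + 1, p.2 + 1)

/-- Cost of a step in the grid graph `G_{x,y}`: H- and V-steps cost 1, a D-step from `p`
costs 0 iff `x_{p.1+1} = y_{p.2+1}`. -/
def stepCost {α : Type*} [DecidableEq α] (x y : List α) (p q : ℕ × ℕ) : ℕ :=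
  if q = (p.1 + 1, p.2 + 1) then (if x[p.1]? = y[p.2]? then 0 else 1) else 1

/-- Cost of a path (list of vertices) in `G_{x,y}`. -/
def pathCost {α : Type*} [DecidableEq α] (x y : List α) (τ : List (ℕ × ℕ)) : ℕ :=
  ((τ.zip τ.tail).map (fun e => stepCost x y e.1 e.2)).sum

def IsPath (τ : List (ℕ × ℕ)) : Prop := τ.Chain' IsStep

def IsPathFrom (τ : List (ℕ × ℕ)) (a b : ℕ × ℕ) : Prop :=
  IsPath τ ∧ τ.head? = some a ∧ τ.getLast? = some b

/-- Minimum cost of a corner-to-corner path in the box `I × J` of `G_{x,y}`. -/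
noncomputable def boxCost {α : Type*} [DecidableEq α] (x y : List α) (I J : ℕ × ℕ) : ℕ :=
  sInf {c | ∃ τ, IsPathFrom τ (I.1, J.1) (I.2, J.2) ∧ pathCost x y τ = c}

/-- A path crosses the box `I × J`: all its vertices lie in the box and its horizontal
projection is exactly `I`. -/
def Crosses (τ : List (ℕ × ℕ)) (I J : ℕ × ℕ) : Prop :=
  IsPath τ ∧ τ ≠ [] ∧
  (∀ v ∈ τ, I.1 ≤ v.1 ∧ v.1 ≤ I.2 ∧ J.1 ≤ v.2 ∧ v.2 ≤ J.2) ∧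
  τ.head?.map Prod.fst = some I.1 ∧ τ.getLast?.map Prod.fst = some I.2

/-- `σ` is the minimal subpath `τ_I` of `τ` whose horizontal projection is `I`. -/
def IsCrossSubpath (τ σ : List (ℕ × ℕ)) (I : ℕ × ℕ) : Prop :=
  σ <:+: τ ∧ σ ≠ [] ∧
  (∀ v ∈ σ, I.1 ≤ v.1 ∧ v.1 ≤ I.2) ∧
  σ.head?.map Prod.fst = some I.1 ∧ σ.getLast?.map Prod.fst = some I.2 ∧
  (∀ v ∈ σ.tail, v.1 ≠ I.1) ∧ (∀ v ∈ σ.dropLast, v.1 ≠ I.2)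

/-- The box `I × J` `(1-δ)`-covers a path whose relevant subpath is `σ`: the start (end)
vertex of `σ` is within `δ·μ(I)` vertical units of the lower-left (upper-right) corner. -/
def CoversAt (δ : ℚ) (I J : ℕ × ℕ) (σ : List (ℕ × ℕ)) : Prop :=
  ∃ s e : ℕ × ℕ, σ.head? = some s ∧ σ.getLast? = some e ∧
    |(s.2 : ℚ) - (J.1 : ℚ)| ≤ δ * ((I.2 : ℚ) - (I.1 : ℚ)) ∧
    |(e.2 : ℚ) - (J.2 : ℚ)| ≤ δ * ((I.2 : ℚ) - (I.1 : ℚ))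

section AuxStmt7

variable {α : Type*} [DecidableEq α] (x y : List α)

lemma pathCost_cons_cons (a b : ℕ × ℕ) (l : List (ℕ × ℕ)) :
    pathCost x y (a :: b :: l) = stepCost x y a b + pathCost x y (b :: l) := by
  simp [pathCost]

lemma pathCost_singleton (a : ℕ × ℕ) : pathCost x y [a] = 0 := by
  simp [pathCost]

/-- A purely vertical path of `m` steps starting at `a`. -/
def vpath (a : ℕ × ℕ) : ℕ → List (ℕ × ℕ)
  | 0 => [a]
  | m + 1 => a :: vpath (a.1, a.2 + 1) m

lemma vpath_spec : ∀ (m : ℕ) (a : ℕ × ℕ),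
    IsPathFrom (vpath a m) a (a.1, a.2 + m) ∧ pathCost x y (vpath a m) = m
  | 0, a => by
    refine ⟨⟨?_, ?_, ?_⟩, ?_⟩ <;> simp [vpath, IsPath, pathCost, List.Chain', List.isChain_singleton]
  | m + 1, a => by
    obtain ⟨⟨hchain, hhead, hlast⟩, hcost⟩ := vpath_spec m (a.1, a.2 + 1)
    have hne : vpath (a.1, a.2 + 1) m ≠ [] := by
      intro h; rw [h] at hhead; simp at hhead
    obtain ⟨t, ht⟩ : ∃ t, vpath (a.1, a.2 + 1) m = (a.1, a.2 + 1) :: t := by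
      cases hv : vpath (a.1, a.2 + 1) m with
      | nil => exact absurd hv hne
      | cons h t => rw [hv] at hhead; simp at hhead; exact ⟨t, by rw [hhead]⟩
    refine ⟨⟨?_, ?_, ?_⟩, ?_⟩
    · show (a :: vpath (a.1, a.2 + 1) m).Chain' IsStep
      rw [ht] at hchain ⊢
      exact List.isChain_cons_cons.mpr ⟨Or.inr (Or.inl rfl), hchain⟩
    · simp [vpath]
    · show (a :: vpath (a.1, a.2 + 1) m).getLast? = _
      rw [ht, List.getLast?_cons_cons, ← ht, hlast]
      have h' : a.2 + 1 + m = a.2 + (m + 1) := by omega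
      simp [h']
    · show pathCost x y (a :: vpath (a.1, a.2 + 1) m) = m + 1
      rw [ht] at hcost ⊢
      rw [pathCost_cons_cons, hcost, stepCost]
      have : (a.1, a.2 + 1) ≠ (a.1 + 1, a.2 + 1) := by simp
      rw [if_neg this]
      omega

/-- Vertical minus horizontal displacement is bounded by the cost. -/
lemma disp_bound : ∀ (l : List (ℕ × ℕ)) (p e : ℕ × ℕ),
    (p :: l).Chain' IsStep → (p :: l).getLast? = some e →
    e.2 + p.1 ≤ e.1 + p.2 + pathCost x y (p :: l) ∧
    e.1 + p.2 ≤ e.2 + p.1 + pathCost x y (p :: l)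
  | [], p, e, _, hlast => by
    simp at hlast
    subst hlast
    simp [pathCost_singleton]
    omega
  | q :: rest, p, e, hchain, hlast => by
    rw [List.Chain', List.isChain_cons_cons] at hchain
    obtain ⟨hstep, hchain⟩ := hchain
    rw [List.getLast?_cons_cons] at hlast
    obtain ⟨h1, h2⟩ := disp_bound rest q e hchain hlast
    rw [pathCost_cons_cons]
    rcases hstep with h | h | h
    · have hc : stepCost x y p q = 1 := by
        rw [stepCost, if_neg]; intro hq; rw [h] at hq; simp at hq
      subst h; simp at *; omega
    · have hc : stepCost x y p q = 1 := by
        rw [stepCost, if_neg]; intro hq; rw [h] at hq; simp at hq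
      subst h; simp at *; omega
    · subst h; simp at *; omega

/-- Clamping a path below level `K` and extending vertically up to `K`. -/
lemma clamp (K : ℕ) : ∀ (l : List (ℕ × ℕ)) (p e : ℕ × ℕ),
    (p :: l).Chain' IsStep → (p :: l).getLast? = some e →
    ∃ σ', IsPathFrom σ' (p.1, min p.2 K) (e.1, K) ∧
      pathCost x y σ' + (p.2 - K) ≤
        pathCost x y (p :: l) + (e.2 - K) + (K - e.2)
  | [], p, e, _, hlast => by
    simp at hlast
    subst hlast
    obtain ⟨hfrom, hcost⟩ := vpath_spec x y (K - min p.2 K) (p.1, min p.2 K)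
    refine ⟨vpath (p.1, min p.2 K) (K - min p.2 K), ?_, ?_⟩
    · have : min p.2 K + (K - min p.2 K) = K := by omega
      rwa [this] at hfrom
    · rw [hcost, pathCost_singleton]; omega
  | q :: rest, p, e, hchain, hlast => by
    rw [List.Chain', List.isChain_cons_cons] at hchain
    obtain ⟨hstep, hchain⟩ := hchain
    rw [List.getLast?_cons_cons] at hlast
    obtain ⟨σ'', ⟨hc'', hh'', hl''⟩, hcost''⟩ :=
      clamp K rest q e hchain hlast
    have hne'' : σ'' ≠ [] := by intro h; rw [h] at hh''; simp at hh''
    obtain ⟨t, ht⟩ : ∃ t, σ'' = (q.1, min q.2 K) :: t := by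
      cases hv : σ'' with
      | nil => exact absurd hv hne''
      | cons h t => rw [hv] at hh''; simp at hh''; exact ⟨t, by rw [hh'']⟩
    rw [pathCost_cons_cons]
    by_cases hq : q.2 ≤ K
    · -- below the clamp level: keep the step
      have hp : p.2 ≤ K := by
        rcases hstep with h | h | h <;> rw [h] at hq <;> simp at hq <;> omega
      have hminq : min q.2 K = q.2 := by omega
      have hminp : min p.2 K = p.2 := by omega
      refine ⟨p :: σ'', ⟨?_, ?_, ?_⟩, ?_⟩
      · rw [ht, hminq]
        exact List.isChain_cons_cons.mpr ⟨by simpa using hstep, by rwa [ht, hminq] at hc''⟩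
      · simp [hminp]
      · rw [ht, List.getLast?_cons_cons, ← ht, hl'']
      · rw [ht, hminq] at hcost''
        rw [ht, hminq, pathCost_cons_cons]
        simp only [Prod.mk.eta] at hcost'' ⊢
        omega
    · -- above the clamp level
      push_neg at hq
      have hp : K ≤ p.2 := by rcases hstep with h | h | h <;> (rw [h] at hq; omega)
      have hminq : min q.2 K = K := by omega
      have hminp : min p.2 K = K := by omega
      rcases hstep with h | h | h
      · -- horizontal step: replace by horizontal step at level K
        refine ⟨(p.1, K) :: σ'', ⟨?_, ?_, ?_⟩, ?_⟩
        · rw [ht, hminq, h]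
          refine List.isChain_cons_cons.mpr ⟨Or.inl rfl, ?_⟩
          rwa [ht, hminq, h] at hc''
        · simp [hminp]
        · rw [ht, List.getLast?_cons_cons, ← ht, hl'']
        · rw [ht, hminq] at hcost'' ⊢
          rw [pathCost_cons_cons]
          have hsc : stepCost x y (p.1, K) (q.1, K) = 1 := by
            rw [stepCost, if_neg]; simp
          rw [hsc]
          have hsc2 : 1 ≤ stepCost x y p q := by
            rw [stepCost, if_neg]; intro hh; rw [h] at hh; simp at hh
          rw [h] at hq hcost'' hsc2 ⊢
          simp only [Prod.mk.eta] at *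
          omega
      · -- vertical step: drop it
        refine ⟨σ'', ⟨hc'', ?_, hl''⟩, ?_⟩
        · rw [hh'', h]
          have h5 : (p.2 + 1) ⊓ K = p.2 ⊓ K := by omega
          simp [h5]
        · have hsc2 : 1 ≤ stepCost x y p q := by
            rw [stepCost, if_neg]; intro hh; rw [h] at hh; simp at hh
          rw [h] at hq hcost'' hsc2 ⊢
          simp only [Prod.mk.eta] at *
          omega
      · -- diagonal step: replace by horizontal step at level K
        refine ⟨(p.1, K) :: σ'', ⟨?_, ?_, ?_⟩, ?_⟩
        · rw [ht, hminq, h]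
          refine List.isChain_cons_cons.mpr ⟨Or.inl rfl, ?_⟩
          rwa [ht, hminq, h] at hc''
        · simp [hminp]
        · rw [ht, List.getLast?_cons_cons, ← ht, hl'']
        · rw [ht, hminq] at hcost'' ⊢
          rw [pathCost_cons_cons]
          have hsc : stepCost x y (p.1, K) (q.1, K) = 1 := by
            rw [stepCost, if_neg]; rw [h]; simp
          rw [hsc]
          rw [h] at hq hcost'' ⊢
          simp only [Prod.mk.eta] at *
          omega

end AuxStmt7

/-- existence of a square interval J¹ with μ(J¹)=μ(I') such that
ncost(I'×J¹) ≤ 2·ncost(τ_{I'}) and I'×J¹ (1-ncost(τ_{I'}))-covers τ. -/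
theorem stmt7 {α : Type*} [DecidableEq α] (x y : List α) (τ σ : List (ℕ × ℕ))
    (I J I' : ℕ × ℕ) (w : ℕ) (hw : 0 < w)
    (hcross : Crosses τ I J)
    (hsub : I.1 ≤ I'.1 ∧ I'.2 ≤ I.2) (hw' : I'.2 - I'.1 = w)
    (hJw : w ≤ J.2 - J.1)
    (hσ : IsCrossSubpath τ σ I') :
    ∃ J1 : ℕ × ℕ, J1.2 - J1.1 = w ∧
      (boxCost x y I' J1 : ℚ) / (w : ℚ) ≤ 2 * ((pathCost x y σ : ℚ) / (w : ℚ)) ∧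
      CoversAt ((pathCost x y σ : ℚ) / (w : ℚ)) I' J1 σ := by
  obtain ⟨hinf, hne, hmem, hhead, hlast, -, -⟩ := hσ
  have hchainσ : σ.Chain' IsStep := hcross.1.infix hinf
  obtain ⟨s, rest, rfl⟩ : ∃ s rest, σ = s :: rest := by
    cases σ with
    | nil => exact absurd rfl hne
    | cons a l => exact ⟨a, l, rfl⟩
  set σ := s :: rest with hσdef
  have hheads : σ.head? = some s := rfl
  have hs1 : s.1 = I'.1 := by simp [hσdef] at hhead; omega
  obtain ⟨e, helast⟩ : ∃ e, σ.getLast? = some e := by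
    exact ⟨σ.getLast hne, List.getLast?_eq_getLast hne⟩
  have he1 : e.1 = I'.2 := by
    rw [helast] at hlast; simp at hlast; omega
  have hsmem : s ∈ σ := List.mem_cons_self
  have hI'le : I'.1 ≤ I'.2 := le_trans (hmem s hsmem).1 (hmem s hsmem).2
  have hI'2 : I'.2 = I'.1 + w := by omega
  set c := pathCost x y σ with hcdef
  -- displacement bounds
  obtain ⟨hd1, hd2⟩ := disp_bound x y rest s e hchainσ helast
  -- clamped path
  obtain ⟨σ', ⟨hc', hh', hl'⟩, hcost'⟩ := clamp x y (s.2 + w) rest s e hchainσ helast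
  have hmins : min s.2 (s.2 + w) = s.2 := by omega
  rw [hmins] at hh'
  have hcc : pathCost x y (s :: rest) = c := rfl
  have hπcost : pathCost x y σ' ≤ 2 * c := by
    have h1 : e.2 + s.1 ≤ e.1 + s.2 + c := hd1
    have h2 : e.1 + s.2 ≤ e.2 + s.1 + c := hd2
    omega
  refine ⟨(s.2, s.2 + w), by simp, ?_, ?_⟩
  · -- boxCost bound
    have hbox : boxCost x y I' (s.2, s.2 + w) ≤ pathCost x y σ' := by
      apply Nat.sInf_le
      refine ⟨σ', ⟨hc', ?_, ?_⟩, rfl⟩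
      · rw [hh', hs1]
      · rw [hl', he1]
    have hboxQ : (boxCost x y I' (s.2, s.2 + w) : ℚ) ≤ 2 * c := by
      calc (boxCost x y I' (s.2, s.2 + w) : ℚ) ≤ (pathCost x y σ' : ℚ) := by
            exact_mod_cast hbox
        _ ≤ 2 * c := by exact_mod_cast hπcost
    rw [← mul_div_assoc]
    apply div_le_div_of_nonneg_right hboxQ
    positivity
  · -- covering
    refine ⟨s, e, hheads, helast, ?_, ?_⟩
    · have : ((I'.2 : ℚ) - I'.1) = w := by rw [hI'2]; push_cast; ring
      rw [this]
      have hwne : (w : ℚ) ≠ 0 := by positivity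
      rw [div_mul_cancel₀ _ hwne]
      simp
    · have : ((I'.2 : ℚ) - I'.1) = w := by rw [hI'2]; push_cast; ring
      rw [this]
      have hwne : (w : ℚ) ≠ 0 := by positivity
      rw [div_mul_cancel₀ _ hwne]
      rw [abs_le]
      have h1 : e.2 + s.1 ≤ e.1 + s.2 + c := hd1
      have h2 : e.1 + s.2 ≤ e.2 + s.1 + c := hd2
      have h1' : e.2 ≤ s.2 + w + c := by omega
      have h2' : s.2 + w ≤ e.2 + c := by omega
      constructor
      · have := h2'
        push_cast
        have : (s.2 : ℚ) + w ≤ e.2 + c := by exact_mod_cast h2'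
        linarith
      · have : (e.2 : ℚ) ≤ s.2 + w + c := by exact_mod_cast h1'
        push_cast
        linarith
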